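/- Fix ρ ∈ (−1,0) and a probability mass function Q₀ on 𝒳. Define recursively, for ℓ = 0, 1, 2, …: T_ℓ(y) = ( ∑_a Q_ℓ(a) P(y|a)^{1/(1+ρ)} )^{1+ρ} / ∑_{y'} ( ∑_a Q_ℓ(a) P(y'|a)^{1/(1+ρ)} )^{1+ρ}; V_ℓ(x|y) = Q_ℓ(x) P(y|x)^{1/(1+ρ)} / ∑_a Q_ℓ(a) P(y|a)^{1/(1+ρ)} for each y with T_ℓ(y) > 0; and Q_{ℓ+1}(x) = ∑_y T_ℓ(y) V_ℓ(x|y). Then for every ℓ: F_ρ(T_ℓ∘V_ℓ, Q_ℓ) ≥ F_ρ(T_ℓ∘V_ℓ, Q_{ℓ+1}) ≥ F_ρ(T_{ℓ+1}∘V_{ℓ+1}, Q_{ℓ+1}); in particular the sequence F_ρ(T_ℓ∘V_ℓ, Q_ℓ) is non-increasing. -/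

import Mathlib

open scoped BigOperators
open Filter Topology

/-- `f` is a probability mass function on a finite alphabet. -/
def IsPMF {α : Type*} [Fintype α] (f : α → ℝ) : Prop :=
  (∀ a, 0 ≤ f a) ∧ ∑ a, f a = 1

/-- `P` is a discrete memoryless channel from `𝓧` to `𝓨`. -/
def IsChannel {𝓧 𝓨 : Type*} [Fintype 𝓧] [Fintype 𝓨] (P : 𝓧 → 𝓨 → ℝ) : Prop :=
  ∀ x, IsPMF (P x)

/-- `V` is a conditional pmf on `𝓧` given `𝓨`. -/
def IsCondPMF {𝓧 𝓨 : Type*} [Fintype 𝓧] [Fintype 𝓨] (V : 𝓨 → 𝓧 → ℝ) : Prop :=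
  ∀ y, IsPMF (V y)

/-- one term `s·log(s/t)` of a KL divergence, with the conventions
    `0·log(0/t) = 0` and `s·log(s/0) = +∞` for `s > 0`. -/
noncomputable def klTerm (s t : ℝ) : EReal :=
  if s = 0 then 0 else if t = 0 then ⊤ else ((s * Real.log (s / t) : ℝ) : EReal)

/-- `D(T∘V ‖ Q∘P)`. -/
noncomputable def DQP {𝓧 𝓨 : Type*} [Fintype 𝓧] [Fintype 𝓨]
    (T : 𝓨 → ℝ) (V : 𝓨 → 𝓧 → ℝ) (Q : 𝓧 → ℝ) (P : 𝓧 → 𝓨 → ℝ) : EReal :=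
  ∑ y, ∑ x, klTerm (T y * V y x) (Q x * P x y)

/-- `D(T∘V ‖ T×Q)`. -/
noncomputable def DTQ {𝓧 𝓨 : Type*} [Fintype 𝓧] [Fintype 𝓨]
    (T : 𝓨 → ℝ) (V : 𝓨 → 𝓧 → ℝ) (Q : 𝓧 → ℝ) : EReal :=
  ∑ y, ∑ x, klTerm (T y * V y x) (T y * Q x)

/-- Gallager's function `E₀(ρ,Q)` (for `ρ > −1`). -/
noncomputable def E0 {𝓧 𝓨 : Type*} [Fintype 𝓧] [Fintype 𝓨]
    (ρ : ℝ) (Q : 𝓧 → ℝ) (P : 𝓧 → 𝓨 → ℝ) : ℝ :=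
  - Real.log (∑ y, (∑ x, Q x * P x y ^ (1 / (1 + ρ))) ^ (1 + ρ))

/-- The joint distribution `T_ρ∘V_ρ` on `𝓧 × 𝓨` (for `ρ > −1`). -/
noncomputable def Jrho {𝓧 𝓨 : Type*} [Fintype 𝓧] [Fintype 𝓨]
    (ρ : ℝ) (Q : 𝓧 → ℝ) (P : 𝓧 → 𝓨 → ℝ) (x : 𝓧) (y : 𝓨) : ℝ :=
  Q x * P x y ^ (1 / (1 + ρ)) * (∑ a, Q a * P a y ^ (1 / (1 + ρ))) ^ ρ /
    ∑ y', (∑ a, Q a * P a y' ^ (1 / (1 + ρ))) ^ (1 + ρ)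

/-- `max_{x : Q(x) > 0} P(y|x)`. -/
noncomputable def maxP {𝓧 𝓨 : Type*} (Q : 𝓧 → ℝ) (P : 𝓧 → 𝓨 → ℝ) (y : 𝓨) : ℝ :=
  ⨆ x : {x // 0 < Q x}, P x.1 y

/-- `E₀(−1,Q) = −log ∑_y max_{x : Q(x)>0} P(y|x)`. -/
noncomputable def E0m1 {𝓧 𝓨 : Type*} [Fintype 𝓧] [Fintype 𝓨]
    (Q : 𝓧 → ℝ) (P : 𝓧 → 𝓨 → ℝ) : ℝ :=
  - Real.log (∑ y, maxP Q P y)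

/-- `E₀(ρ,Q)` extended to `ρ = −1`. -/
noncomputable def E0full {𝓧 𝓨 : Type*} [Fintype 𝓧] [Fintype 𝓨]
    (ρ : ℝ) (Q : 𝓧 → ℝ) (P : 𝓧 → 𝓨 → ℝ) : ℝ :=
  if ρ = -1 then E0m1 Q P else E0 ρ Q P

/-- `T_{−1}(y) ∝ max_{a : Q(a)>0} P(y|a)`. -/
noncomputable def Tm1 {𝓧 𝓨 : Type*} [Fintype 𝓧] [Fintype 𝓨]
    (Q : 𝓧 → ℝ) (P : 𝓧 → 𝓨 → ℝ) (y : 𝓨) : ℝ :=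
  maxP Q P y / ∑ y', maxP Q P y'

/-- `V` is admissible at `ρ = −1`: `V(x|y) = 0` for every `x` outside
    `argmax_{a : Q(a)>0} P(y|a)`. -/
def AdmissibleAtM1 {𝓧 𝓨 : Type*} [Fintype 𝓧] [Fintype 𝓨]
    (Q : 𝓧 → ℝ) (P : 𝓧 → 𝓨 → ℝ) (V : 𝓨 → 𝓧 → ℝ) : Prop :=
  ∀ y x, ¬ (0 < Q x ∧ ∀ a, 0 < Q a → P a y ≤ P x y) → V y x = 0

/-- the error exponent `E_e(R,Q)`. -/
noncomputable def Ee {𝓧 𝓨 : Type*} [Fintype 𝓧] [Fintype 𝓨]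
    (R : ℝ) (Q : 𝓧 → ℝ) (P : 𝓧 → 𝓨 → ℝ) : EReal :=
  sInf {v | ∃ T : 𝓨 → ℝ, ∃ V : 𝓨 → 𝓧 → ℝ, IsPMF T ∧ IsCondPMF V ∧
    v = DQP T V Q P + max (DTQ T V Q - (R : EReal)) 0}

/-- the ML correct-decoding exponent `E_c^{ML}(R,Q)`. -/
noncomputable def EcML {𝓧 𝓨 : Type*} [Fintype 𝓧] [Fintype 𝓨]
    (R : ℝ) (Q : 𝓧 → ℝ) (P : 𝓧 → 𝓨 → ℝ) : EReal :=
  sInf {v | ∃ T : 𝓨 → ℝ, ∃ V : 𝓨 → 𝓧 → ℝ, IsPMF T ∧ IsCondPMF V ∧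
    v = DQP T V Q P + max ((R : EReal) - DTQ T V Q) 0}

/-- the strict correct-decoding exponent `E_c(R,Q)` (`+∞` if infeasible). -/
noncomputable def Ec {𝓧 𝓨 : Type*} [Fintype 𝓧] [Fintype 𝓨]
    (R : ℝ) (Q : 𝓧 → ℝ) (P : 𝓧 → 𝓨 → ℝ) : EReal :=
  sInf {v | ∃ T : 𝓨 → ℝ, ∃ V : 𝓨 → 𝓧 → ℝ, IsPMF T ∧ IsCondPMF V ∧
    (R : EReal) ≤ DTQ T V Q ∧ v = DQP T V Q P}

/-- the mutual information `I(Q∘P)`. -/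
noncomputable def MI {𝓧 𝓨 : Type*} [Fintype 𝓧] [Fintype 𝓨]
    (Q : 𝓧 → ℝ) (P : 𝓧 → 𝓨 → ℝ) : ℝ :=
  ∑ x, ∑ y, if Q x * P x y = 0 then 0
    else Q x * P x y * Real.log (P x y / ∑ a, Q a * P a y)

/-- the capacity `C(Z)` of the channel restricted to input letters in `Z`. -/
noncomputable def capacity {𝓧 𝓨 : Type*} [Fintype 𝓧] [Fintype 𝓨]
    (P : 𝓧 → 𝓨 → ℝ) (Z : Set 𝓧) : ℝ :=
  sSup {c | ∃ Q' : 𝓧 → ℝ, IsPMF Q' ∧ (∀ x, 0 < Q' x → x ∈ Z) ∧ c = MI Q' P}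

/-- `R_{−1}^{−}(Q)`. -/
noncomputable def Rm1minus {𝓧 𝓨 : Type*} [Fintype 𝓧] [Fintype 𝓨]
    (Q : 𝓧 → ℝ) (P : 𝓧 → 𝓨 → ℝ) : EReal :=
  sInf {v | ∃ V : 𝓨 → 𝓧 → ℝ, IsCondPMF V ∧ AdmissibleAtM1 Q P V ∧
    v = DTQ (Tm1 Q P) V Q}

/-- `R_{−1}^{+}(Q)`. -/
noncomputable def Rm1plus {𝓧 𝓨 : Type*} [Fintype 𝓧] [Fintype 𝓨]
    (Q : 𝓧 → ℝ) (P : 𝓧 → 𝓨 → ℝ) : EReal :=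
  sSup {v | ∃ V : 𝓨 → 𝓧 → ℝ, IsCondPMF V ∧ AdmissibleAtM1 Q P V ∧
    v = DTQ (Tm1 Q P) V Q}

/-- `F_ρ(T∘V, Q) = D(T∘V‖Q∘P) + ρ·D(T∘V‖T×Q)`. -/
noncomputable def Frho {𝓧 𝓨 : Type*} [Fintype 𝓧] [Fintype 𝓨]
    (ρ : ℝ) (T : 𝓨 → ℝ) (V : 𝓨 → 𝓧 → ℝ) (Q : 𝓧 → ℝ) (P : 𝓧 → 𝓨 → ℝ) : EReal :=
  DQP T V Q P + (ρ : EReal) * DTQ T V Q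

/-- the unconstrained penalized minimum
    `min_{T,V} { D(T∘V‖Q∘P) + ρ·(D(T∘V‖T×Q) − R) }`. -/
noncomputable def penMin {𝓧 𝓨 : Type*} [Fintype 𝓧] [Fintype 𝓨]
    (Q : 𝓧 → ℝ) (P : 𝓧 → 𝓨 → ℝ) (R ρ : ℝ) : EReal :=
  sInf {v | ∃ T : 𝓨 → ℝ, ∃ V : 𝓨 → 𝓧 → ℝ, IsPMF T ∧ IsCondPMF V ∧
    v = DQP T V Q P + (ρ : EReal) * (DTQ T V Q - (R : EReal))}

/-- the support-constrained penalized minimum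
    `min_{T,V : supp(V) ⊆ supp(Q)} { D(T∘V‖Q∘P) − ρ·(R − D(T∘V‖T×Q)) }`. -/
noncomputable def penMinS {𝓧 𝓨 : Type*} [Fintype 𝓧] [Fintype 𝓨]
    (Q : 𝓧 → ℝ) (P : 𝓧 → 𝓨 → ℝ) (R ρ : ℝ) : EReal :=
  sInf {v | ∃ T : 𝓨 → ℝ, ∃ V : 𝓨 → 𝓧 → ℝ, IsPMF T ∧ IsCondPMF V ∧
    (∀ y x, Q x = 0 → V y x = 0) ∧
    v = DQP T V Q P - (ρ : EReal) * ((R : EReal) - DTQ T V Q)}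


noncomputable def rKL (s t : ℝ) : ℝ := if s = 0 then 0 else s * Real.log (s / t)

lemma coe_sum_EReal {ι : Type*} (s : Finset ι) (f : ι → ℝ) :
    ((∑ i ∈ s, f i : ℝ) : EReal) = ∑ i ∈ s, ((f i : ℝ) : EReal) := by
  induction s using Finset.cons_induction with
  | empty => simp
  | cons a s ha ih => rw [Finset.sum_cons, Finset.sum_cons, EReal.coe_add, ih]

lemma klTerm_eq_rKL (s t : ℝ) (h : s ≠ 0 → t ≠ 0) : klTerm s t = ((rKL s t : ℝ) : EReal) := by
  unfold klTerm rKL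
  by_cases hs : s = 0
  · simp [hs]
  · rw [if_neg hs, if_neg hs, if_neg (h hs)]

lemma gibbs {ι : Type*} [Fintype ι] (p a : ι → ℝ) (hp : ∀ i, 0 ≤ p i)
    (ha : ∀ i, 0 ≤ a i) (hpa : ∀ i, 0 < p i → 0 < a i) (hs : ∑ i, p i = 1)
    {A : ℝ} (hA : 0 < A) (haA : ∑ i, a i ≤ A) :
    ∑ i, (if p i = 0 then 0 else p i * Real.log (a i / p i)) ≤ Real.log A := by
  have key : ∀ i, (if p i = 0 then 0 else p i * Real.log (a i / p i))
      ≤ a i / A - p i + p i * Real.log A := by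
    intro i
    by_cases hpi : p i = 0
    · rw [if_pos hpi, hpi]
      have := ha i
      have := hA
      simp
      positivity
    · have hpi' : 0 < p i := lt_of_le_of_ne (hp i) (Ne.symm hpi)
      have hai : 0 < a i := hpa i hpi'
      rw [if_neg hpi]
      have ht : 0 < a i / (p i * A) := by positivity
      have h1 := Real.log_le_sub_one_of_pos ht
      have h2 : p i * Real.log (a i / (p i * A)) ≤ p i * (a i / (p i * A) - 1) :=
        mul_le_mul_of_nonneg_left h1 (hp i)
      have h3 : Real.log (a i / p i) = Real.log (a i / (p i * A)) + Real.log A := by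
        rw [← Real.log_mul (ne_of_gt ht) (ne_of_gt hA)]
        congr 1
        field_simp
      have h4 : p i * (a i / (p i * A) - 1) = a i / A - p i := by
        field_simp
      rw [h3, mul_add]
      linarith
  calc ∑ i, (if p i = 0 then 0 else p i * Real.log (a i / p i))
      ≤ ∑ i, (a i / A - p i + p i * Real.log A) := Finset.sum_le_sum (fun i _ => key i)
    _ = (∑ i, a i) / A - 1 + Real.log A := by
        rw [Finset.sum_add_distrib, Finset.sum_sub_distrib, ← Finset.sum_div, hs,
          ← Finset.sum_mul, hs, one_mul]
    _ ≤ Real.log A := by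
        have : (∑ i, a i) / A ≤ 1 := (div_le_one hA).mpr haA
        linarith

lemma Frho_eq_coe {𝓧 𝓨 : Type*} [Fintype 𝓧] [Fintype 𝓨] (ρ : ℝ) (T : 𝓨 → ℝ) (V : 𝓨 → 𝓧 → ℝ)
    (Q : 𝓧 → ℝ) (P : 𝓧 → 𝓨 → ℝ)
    (h1 : ∀ y x, T y * V y x ≠ 0 → Q x * P x y ≠ 0)
    (h2 : ∀ y x, T y * V y x ≠ 0 → T y * Q x ≠ 0) :
    Frho ρ T V Q P = (((∑ y, ∑ x, rKL (T y * V y x) (Q x * P x y)) +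
      ρ * ∑ y, ∑ x, rKL (T y * V y x) (T y * Q x) : ℝ) : EReal) := by
  unfold Frho DQP DTQ
  rw [EReal.coe_add, EReal.coe_mul]
  congr 1
  · rw [coe_sum_EReal]
    refine Finset.sum_congr rfl fun y _ => ?_
    rw [coe_sum_EReal]
    exact Finset.sum_congr rfl fun x _ => klTerm_eq_rKL _ _ (h1 y x)
  · congr 1
    rw [coe_sum_EReal]
    refine Finset.sum_congr rfl fun y _ => ?_
    rw [coe_sum_EReal]
    exact Finset.sum_congr rfl fun x _ => klTerm_eq_rKL _ _ (h2 y x)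
lemma stepC {𝓧 𝓨 : Type*} [Fintype 𝓧] [Fintype 𝓨] (P : 𝓧 → 𝓨 → ℝ)
    (ρ : ℝ) (hρ : ρ ∈ Set.Ioo (-1:ℝ) 0)
    (T : 𝓨 → ℝ) (V : 𝓨 → 𝓧 → ℝ) (Q Q2 : 𝓧 → ℝ)
    (hT : IsPMF T) (hVp : IsCondPMF V) (hQ : IsPMF Q)
    (hsupp : ∀ y x, T y * V y x ≠ 0 → 0 < Q x ∧ 0 < P x y)
    (hQ2 : ∀ x, Q2 x = ∑ y, T y * V y x) :
    Frho ρ T V Q2 P ≤ Frho ρ T V Q P := by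
  have hρ1 : (0:ℝ) < 1 + ρ := by linarith [hρ.1]
  have hTV0 : ∀ y x, 0 ≤ T y * V y x := fun y x => mul_nonneg (hT.1 y) ((hVp y).1 x)
  have hTVpos : ∀ y x, T y * V y x ≠ 0 → 0 < T y * V y x :=
    fun y x h => lt_of_le_of_ne (hTV0 y x) (Ne.symm h)
  have hQ2nn : ∀ x, 0 ≤ Q2 x := fun x => (hQ2 x) ▸ Finset.sum_nonneg fun y _ => hTV0 y x
  have hQ2sum : ∑ x, Q2 x = 1 := by
    have h1 : ∑ x, Q2 x = ∑ y, T y * ∑ x, V y x := by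
      simp only [hQ2, Finset.mul_sum]; rw [Finset.sum_comm]
    rw [h1, Finset.sum_congr rfl fun y _ => by rw [(hVp y).2, mul_one], hT.2]
  have hTVle : ∀ y x, T y * V y x ≤ Q2 x := by
    intro y x
    rw [hQ2 x]
    exact Finset.single_le_sum (fun y' _ => hTV0 y' x) (Finset.mem_univ y)
  have hQ2pos : ∀ y x, T y * V y x ≠ 0 → 0 < Q2 x :=
    fun y x h => lt_of_lt_of_le (hTVpos y x h) (hTVle y x)
  -- rewrite both sides as coercions of real sums
  rw [Frho_eq_coe ρ T V Q P
      (fun y x h => mul_ne_zero (ne_of_gt (hsupp y x h).1) (ne_of_gt (hsupp y x h).2))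
      (fun y x h => mul_ne_zero (left_ne_zero_of_mul h) (ne_of_gt (hsupp y x h).1)),
    Frho_eq_coe ρ T V Q2 P
      (fun y x h => mul_ne_zero (ne_of_gt (hQ2pos y x h)) (ne_of_gt (hsupp y x h).2))
      (fun y x h => mul_ne_zero (left_ne_zero_of_mul h) (ne_of_gt (hQ2pos y x h)))]
  rw [EReal.coe_le_coe_iff]
  -- per-term difference identity
  have key : ∀ y x,
      (rKL (T y * V y x) (Q x * P x y) + ρ * rKL (T y * V y x) (T y * Q x))
        - (rKL (T y * V y x) (Q2 x * P x y) + ρ * rKL (T y * V y x) (T y * Q2 x))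
      = (1 + ρ) * (T y * V y x) * Real.log (Q2 x / Q x) := by
    intro y x
    by_cases h : T y * V y x = 0
    · simp [rKL, h]
    · have hs := hTVpos y x h
      have hQx := (hsupp y x h).1
      have hPx := (hsupp y x h).2
      have hTy : 0 < T y := lt_of_le_of_ne (hT.1 y) (Ne.symm (left_ne_zero_of_mul h))
      have hQ2x := hQ2pos y x h
      simp only [rKL, if_neg h]
      rw [Real.log_div h (mul_ne_zero (ne_of_gt hQx) (ne_of_gt hPx)),
        Real.log_div h (mul_ne_zero (ne_of_gt hTy) (ne_of_gt hQx)),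
        Real.log_div h (mul_ne_zero (ne_of_gt hQ2x) (ne_of_gt hPx)),
        Real.log_div h (mul_ne_zero (ne_of_gt hTy) (ne_of_gt hQ2x)),
        Real.log_div (ne_of_gt hQ2x) (ne_of_gt hQx),
        Real.log_mul (ne_of_gt hQx) (ne_of_gt hPx),
        Real.log_mul (ne_of_gt hTy) (ne_of_gt hQx),
        Real.log_mul (ne_of_gt hQ2x) (ne_of_gt hPx),
        Real.log_mul (ne_of_gt hTy) (ne_of_gt hQ2x)]
      ring
  -- sum over y for fixed x
  have hx : ∀ x, ∑ y, (1 + ρ) * (T y * V y x) * Real.log (Q2 x / Q x)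
      = (1 + ρ) * (if Q2 x = 0 then 0 else Q2 x * Real.log (Q2 x / Q x)) := by
    intro x
    by_cases h : Q2 x = 0
    · rw [if_pos h, mul_zero]
      refine Finset.sum_eq_zero fun y _ => ?_
      have : T y * V y x = 0 := le_antisymm (h ▸ hTVle y x) (hTV0 y x)
      rw [this, mul_zero, zero_mul]
    · rw [if_neg h]
      have : ∀ y ∈ Finset.univ, (1 + ρ) * (T y * V y x) * Real.log (Q2 x / Q x)
          = T y * V y x * ((1 + ρ) * Real.log (Q2 x / Q x)) := fun y _ => by ring
      rw [Finset.sum_congr rfl this, ← Finset.sum_mul, ← hQ2 x]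
      ring
  -- Gibbs bound
  have hgb : ∑ x, (if Q2 x = 0 then 0
      else Q2 x * Real.log ((if Q2 x = 0 then 0 else Q x) / Q2 x)) ≤ Real.log 1 := by
    refine gibbs Q2 (fun x => if Q2 x = 0 then 0 else Q x) hQ2nn
      (fun x => by by_cases h : Q2 x = 0 <;> simp [h, hQ.1 x]) ?_ hQ2sum one_pos ?_
    · intro x hx'
      rw [if_neg (ne_of_gt hx')]
      obtain ⟨y, hy⟩ := Finset.exists_ne_zero_of_sum_ne_zero
        (((hQ2 x) ▸ ne_of_gt hx') : ∑ y, T y * V y x ≠ 0)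
      exact (hsupp y x hy.2).1
    · rw [← hQ.2]
      exact Finset.sum_le_sum fun x _ => by by_cases h : Q2 x = 0 <;> simp [h, hQ.1 x]
  have hgb2 : 0 ≤ ∑ x, (if Q2 x = 0 then 0 else Q2 x * Real.log (Q2 x / Q x)) := by
    have heq : ∀ x ∈ Finset.univ, (if Q2 x = 0 then 0 else Q2 x * Real.log (Q2 x / Q x))
        = -(if Q2 x = 0 then 0
            else Q2 x * Real.log ((if Q2 x = 0 then 0 else Q x) / Q2 x)) := by
      intro x _
      by_cases h : Q2 x = 0
      · simp [h]
      · obtain ⟨y, hy⟩ := Finset.exists_ne_zero_of_sum_ne_zero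
          (((hQ2 x) ▸ h) : ∑ y, T y * V y x ≠ 0)
        have hQx := (hsupp y x hy.2).1
        rw [if_neg h, if_neg h, if_neg h, Real.log_div h (ne_of_gt hQx),
          Real.log_div (ne_of_gt hQx) h]
        ring
    rw [Finset.sum_congr rfl heq]
    rw [Real.log_one] at hgb
    simp only [Finset.sum_neg_distrib]
    linarith
  -- assemble
  have hsum1 : ∑ y, ∑ x,
      ((rKL (T y * V y x) (Q x * P x y) + ρ * rKL (T y * V y x) (T y * Q x))
        - (rKL (T y * V y x) (Q2 x * P x y) + ρ * rKL (T y * V y x) (T y * Q2 x)))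
      = ∑ y, ∑ x, (1 + ρ) * (T y * V y x) * Real.log (Q2 x / Q x) :=
    Finset.sum_congr rfl fun y _ => Finset.sum_congr rfl fun x _ => key y x
  have hsum2 : ∑ y, ∑ x,
      ((rKL (T y * V y x) (Q x * P x y) + ρ * rKL (T y * V y x) (T y * Q x))
        - (rKL (T y * V y x) (Q2 x * P x y) + ρ * rKL (T y * V y x) (T y * Q2 x)))
      = ((∑ y, ∑ x, rKL (T y * V y x) (Q x * P x y))
          + ρ * ∑ y, ∑ x, rKL (T y * V y x) (T y * Q x))
        - ((∑ y, ∑ x, rKL (T y * V y x) (Q2 x * P x y))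
          + ρ * ∑ y, ∑ x, rKL (T y * V y x) (T y * Q2 x)) := by
    simp only [Finset.sum_sub_distrib, Finset.sum_add_distrib, Finset.mul_sum]
  have hsum3 : ∑ y, ∑ x, (1 + ρ) * (T y * V y x) * Real.log (Q2 x / Q x)
      = (1 + ρ) * ∑ x, (if Q2 x = 0 then 0 else Q2 x * Real.log (Q2 x / Q x)) := by
    rw [Finset.sum_comm, Finset.mul_sum]
    exact Finset.sum_congr rfl fun x _ => hx x
  have hfin : 0 ≤ ∑ y, ∑ x, (1 + ρ) * (T y * V y x) * Real.log (Q2 x / Q x) := by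
    rw [hsum3]
    exact mul_nonneg (le_of_lt hρ1) hgb2
  rw [hsum1, hsum3] at hsum2
  have h0 : 0 ≤ (1 + ρ) * ∑ x, (if Q2 x = 0 then 0 else Q2 x * Real.log (Q2 x / Q x)) :=
    mul_nonneg (le_of_lt hρ1) hgb2
  linarith
lemma stepD {𝓧 𝓨 : Type*} [Fintype 𝓧] [Fintype 𝓨]
    (P : 𝓧 → 𝓨 → ℝ) (hP : IsChannel P)
    (ρ : ℝ) (hρ : ρ ∈ Set.Ioo (-1:ℝ) 0)
    (Q : 𝓧 → ℝ) (hQ : IsPMF Q)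
    (T T' : 𝓨 → ℝ) (V V' : 𝓨 → 𝓧 → ℝ)
    (hT : IsPMF T) (hVp : IsCondPMF V)
    (hsupp : ∀ y x, T y * V y x ≠ 0 → 0 < Q x ∧ 0 < P x y)
    (hT'def : ∀ y, T' y = (∑ a, Q a * P a y ^ (1/(1+ρ))) ^ (1+ρ)
        / ∑ y', (∑ a, Q a * P a y' ^ (1/(1+ρ))) ^ (1+ρ))
    (hV'p : IsCondPMF V')
    (hV'def : ∀ y, 0 < T' y → ∀ x,
      V' y x = Q x * P x y ^ (1/(1+ρ)) / ∑ a, Q a * P a y ^ (1/(1+ρ))) :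
    Frho ρ T' V' Q P ≤ Frho ρ T V Q P := by
  have hρ1 : (0:ℝ) < 1 + ρ := by linarith [hρ.1]
  set β : ℝ := 1/(1+ρ) with hβdef
  have hβ : 0 < β := by positivity
  have hb1 : (1+ρ) * β = 1 := by rw [hβdef]; field_simp
  set S : 𝓨 → ℝ := fun y => ∑ a, Q a * P a y ^ β with hSdef
  set Z : ℝ := ∑ y, (S y) ^ (1+ρ) with hZdef
  have hSnn : ∀ y, 0 ≤ S y :=
    fun y => Finset.sum_nonneg fun a _ => mul_nonneg (hQ.1 a) (Real.rpow_nonneg ((hP a).1 y) β)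
  have hapos : ∀ y x, 0 < Q x → 0 < P x y → 0 < Q x * P x y ^ β :=
    fun y x h1 h2 => mul_pos h1 (Real.rpow_pos_of_pos h2 β)
  have hSpos : ∀ y x, 0 < Q x → 0 < P x y → 0 < S y := by
    intro y x h1 h2
    exact lt_of_lt_of_le (hapos y x h1 h2)
      (Finset.single_le_sum (fun a _ => mul_nonneg (hQ.1 a) (Real.rpow_nonneg ((hP a).1 y) β))
        (Finset.mem_univ x))
  have hZpos : 0 < Z := by
    obtain ⟨x, hx⟩ := Finset.exists_ne_zero_of_sum_ne_zero (hQ.2 ▸ one_ne_zero : ∑ a, Q a ≠ 0)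
    have hQx : 0 < Q x := lt_of_le_of_ne (hQ.1 x) (Ne.symm hx.2)
    obtain ⟨y, hy⟩ := Finset.exists_ne_zero_of_sum_ne_zero ((hP x).2 ▸ one_ne_zero : ∑ y, P x y ≠ 0)
    have hPy : 0 < P x y := lt_of_le_of_ne ((hP x).1 y) (Ne.symm hy.2)
    have h1 : 0 < (S y) ^ (1+ρ) := Real.rpow_pos_of_pos (hSpos y x hQx hPy) _
    exact lt_of_lt_of_le h1
      (Finset.single_le_sum (fun y' _ => Real.rpow_nonneg (hSnn y') _) (Finset.mem_univ y))
  have hT'nn : ∀ y, 0 ≤ T' y := fun y => by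
    rw [hT'def y]
    exact div_nonneg (Real.rpow_nonneg (hSnn y) _) (le_of_lt hZpos)
  have hT'sum : ∑ y, T' y = 1 := by
    rw [Finset.sum_congr rfl fun y _ => hT'def y, ← Finset.sum_div]
    exact div_self (ne_of_gt hZpos)
  have hT'S : ∀ y, T' y ≠ 0 → 0 < S y := by
    intro y h
    by_contra hc
    have h0 : S y = 0 := le_antisymm (not_lt.mp hc) (hSnn y)
    apply h
    rw [hT'def y]
    have h0' : (∑ a, Q a * P a y ^ β) = 0 := h0
    rw [h0', Real.zero_rpow (ne_of_gt hρ1), zero_div]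
  have hT'pos : ∀ y, T' y ≠ 0 → 0 < T' y := fun y h => lt_of_le_of_ne (hT'nn y) (Ne.symm h)
  have hsupp' : ∀ y x, T' y * V' y x ≠ 0 → 0 < Q x ∧ 0 < P x y := by
    intro y x h
    have hTy := hT'pos y (left_ne_zero_of_mul h)
    have hSy := hT'S y (left_ne_zero_of_mul h)
    have hVx := right_ne_zero_of_mul h
    rw [hV'def y hTy x] at hVx
    have h1 : Q x * P x y ^ β ≠ 0 := fun h0 => hVx (by rw [h0, zero_div])
    refine ⟨lt_of_le_of_ne (hQ.1 x) (Ne.symm (left_ne_zero_of_mul h1)), ?_⟩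
    have h2 : P x y ^ β ≠ 0 := right_ne_zero_of_mul h1
    have h3 : P x y ≠ 0 := fun h0 => h2 (by rw [h0, Real.zero_rpow (ne_of_gt hβ)])
    exact lt_of_le_of_ne ((hP x).1 y) (Ne.symm h3)
  -- coercions
  rw [Frho_eq_coe ρ T V Q P
      (fun y x h => mul_ne_zero (ne_of_gt (hsupp y x h).1) (ne_of_gt (hsupp y x h).2))
      (fun y x h => mul_ne_zero (left_ne_zero_of_mul h) (ne_of_gt (hsupp y x h).1)),
    Frho_eq_coe ρ T' V' Q P
      (fun y x h => mul_ne_zero (ne_of_gt (hsupp' y x h).1) (ne_of_gt (hsupp' y x h).2))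
      (fun y x h => mul_ne_zero (left_ne_zero_of_mul h) (ne_of_gt (hsupp' y x h).1)),
    EReal.coe_le_coe_iff]
  -- value at the optimizer
  have key1 : ∀ y x, rKL (T' y * V' y x) (Q x * P x y) + ρ * rKL (T' y * V' y x) (T' y * Q x)
      = (T' y * V' y x) * (-Real.log Z) := by
    intro y x
    by_cases h : T' y * V' y x = 0
    · simp [rKL, h]
    · have hTy0 := left_ne_zero_of_mul h
      have hTy := hT'pos y hTy0
      have hSy := hT'S y hTy0
      have hQx := (hsupp' y x h).1
      have hPx := (hsupp' y x h).2
      have hVx : V' y x = Q x * P x y ^ β / S y := hV'def y hTy x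
      have hVx0 : V' y x ≠ 0 := right_ne_zero_of_mul h
      have hlogs : Real.log (T' y * V' y x)
          = Real.log (T' y) + (Real.log (Q x) + β * Real.log (P x y) - Real.log (S y)) := by
        rw [Real.log_mul hTy0 hVx0, hVx,
          Real.log_div (mul_ne_zero (ne_of_gt hQx) (ne_of_gt (Real.rpow_pos_of_pos hPx β)))
            (ne_of_gt hSy),
          Real.log_mul (ne_of_gt hQx) (ne_of_gt (Real.rpow_pos_of_pos hPx β)),
          Real.log_rpow hPx]
      have hlogT : Real.log (T' y) = (1+ρ) * Real.log (S y) - Real.log Z := by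
        rw [hT'def y, Real.log_div (ne_of_gt (Real.rpow_pos_of_pos hSy _)) (ne_of_gt hZpos),
          Real.log_rpow hSy]
      simp only [rKL, if_neg h]
      rw [Real.log_div h (mul_ne_zero (ne_of_gt hQx) (ne_of_gt hPx)),
        Real.log_div h (mul_ne_zero hTy0 (ne_of_gt hQx)),
        Real.log_mul (ne_of_gt hQx) (ne_of_gt hPx),
        Real.log_mul hTy0 (ne_of_gt hQx), hlogs, hlogT]
      linear_combination (T' y * V' y x * Real.log (P x y)) * hb1
  have hval : (∑ y, ∑ x, rKL (T' y * V' y x) (Q x * P x y))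
      + ρ * ∑ y, ∑ x, rKL (T' y * V' y x) (T' y * Q x) = -Real.log Z := by
    have h1 : ∑ y, ∑ x, (rKL (T' y * V' y x) (Q x * P x y)
        + ρ * rKL (T' y * V' y x) (T' y * Q x))
        = ((∑ y, ∑ x, rKL (T' y * V' y x) (Q x * P x y))
          + ρ * ∑ y, ∑ x, rKL (T' y * V' y x) (T' y * Q x)) := by
      simp only [Finset.sum_add_distrib, Finset.mul_sum]
    rw [← h1, Finset.sum_congr rfl fun y _ => Finset.sum_congr rfl fun x _ => key1 y x]
    calc ∑ y, ∑ x, (T' y * V' y x) * (-Real.log Z)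
        = ∑ y, T' y * (-Real.log Z) := by
          refine Finset.sum_congr rfl fun y _ => ?_
          have h2 : ∀ x ∈ Finset.univ, (T' y * V' y x) * (-Real.log Z)
              = (T' y * (-Real.log Z)) * V' y x := fun x _ => by ring
          rw [Finset.sum_congr rfl h2, ← Finset.mul_sum, (hV'p y).2, mul_one]
      _ = -Real.log Z := by rw [← Finset.sum_mul, hT'sum, one_mul]
  -- lower bound for arbitrary (T,V)
  have key2 : ∀ y x, -(rKL (T y * V y x) (Q x * P x y) + ρ * rKL (T y * V y x) (T y * Q x))
      = T y * (if V y x = 0 then 0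
          else V y x * ((1+ρ) * Real.log ((Q x * P x y ^ β) / V y x) - Real.log (T y))) := by
    intro y x
    by_cases hV0 : V y x = 0
    · simp [rKL, hV0]
    by_cases hT0 : T y = 0
    · simp [rKL, hT0]
    rw [if_neg hV0]
    have h : T y * V y x ≠ 0 := mul_ne_zero hT0 hV0
    have hQx := (hsupp y x h).1
    have hPx := (hsupp y x h).2
    simp only [rKL, if_neg h]
    rw [Real.log_div h (mul_ne_zero (ne_of_gt hQx) (ne_of_gt hPx)),
      Real.log_div h (mul_ne_zero hT0 (ne_of_gt hQx)),
      Real.log_div (ne_of_gt (hapos y x hQx hPx)) hV0,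
      Real.log_mul (ne_of_gt hQx) (ne_of_gt (Real.rpow_pos_of_pos hPx β)),
      Real.log_rpow hPx,
      Real.log_mul hT0 hV0,
      Real.log_mul (ne_of_gt hQx) (ne_of_gt hPx),
      Real.log_mul hT0 (ne_of_gt hQx)]
    linear_combination (-(T y * V y x * Real.log (P x y))) * hb1
  have hinner : ∀ y, ∑ x, -(rKL (T y * V y x) (Q x * P x y)
        + ρ * rKL (T y * V y x) (T y * Q x))
      ≤ (if T y = 0 then 0 else T y * Real.log ((S y) ^ (1+ρ) / T y)) := by
    intro y
    by_cases hTy : T y = 0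
    · rw [if_pos hTy]
      apply le_of_eq
      exact Finset.sum_eq_zero fun x _ => by simp [rKL, hTy]
    · rw [if_neg hTy]
      have hTy' : 0 < T y := lt_of_le_of_ne (hT.1 y) (Ne.symm hTy)
      have h1 : ∑ x, -(rKL (T y * V y x) (Q x * P x y)
            + ρ * rKL (T y * V y x) (T y * Q x))
          = T y * ∑ x, (if V y x = 0 then 0
              else V y x * ((1+ρ) * Real.log ((Q x * P x y ^ β) / V y x) - Real.log (T y))) := by
        rw [Finset.mul_sum]
        exact Finset.sum_congr rfl fun x _ => key2 y x
      rw [h1]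
      have hsplit : ∑ x, (if V y x = 0 then 0
            else V y x * ((1+ρ) * Real.log ((Q x * P x y ^ β) / V y x) - Real.log (T y)))
          = (1+ρ) * (∑ x, (if V y x = 0 then 0
              else V y x * Real.log ((Q x * P x y ^ β) / V y x))) - Real.log (T y) := by
        have h2 : ∀ x ∈ Finset.univ, (if V y x = 0 then 0
              else V y x * ((1+ρ) * Real.log ((Q x * P x y ^ β) / V y x) - Real.log (T y)))
            = (1+ρ) * (if V y x = 0 then 0
                else V y x * Real.log ((Q x * P x y ^ β) / V y x))
              - (if V y x = 0 then 0 else V y x) * Real.log (T y) := by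
          intro x _
          by_cases hv : V y x = 0
          · simp [hv]
          · rw [if_neg hv, if_neg hv, if_neg hv]; ring
        rw [Finset.sum_congr rfl h2, Finset.sum_sub_distrib, ← Finset.mul_sum, ← Finset.sum_mul]
        have h3 : ∑ x, (if V y x = 0 then 0 else V y x) = 1 := by
          have h3' : ∀ x ∈ Finset.univ, (if V y x = 0 then 0 else V y x) = V y x := by
            intro x _
            by_cases hv : V y x = 0 <;> simp [hv]
          rw [Finset.sum_congr rfl h3', (hVp y).2]
        rw [h3, one_mul]
      rw [hsplit]
      obtain ⟨x0, hx0⟩ := Finset.exists_ne_zero_of_sum_ne_zero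
        ((hVp y).2 ▸ one_ne_zero : ∑ x, V y x ≠ 0)
      have hx0' : T y * V y x0 ≠ 0 := mul_ne_zero hTy hx0.2
      have hSy : 0 < S y := hSpos y x0 (hsupp y x0 hx0').1 (hsupp y x0 hx0').2
      have hG : ∑ x, (if V y x = 0 then 0 else V y x * Real.log ((Q x * P x y ^ β) / V y x))
          ≤ Real.log (S y) := by
        refine gibbs (V y) (fun x => Q x * P x y ^ β) (hVp y).1
          (fun x => mul_nonneg (hQ.1 x) (Real.rpow_nonneg ((hP x).1 y) β)) ?_ (hVp y).2 hSy
          (le_refl _)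
        intro x hvx
        have h : T y * V y x ≠ 0 := mul_ne_zero hTy (ne_of_gt hvx)
        exact hapos y x (hsupp y x h).1 (hsupp y x h).2
      have h4 : Real.log ((S y) ^ (1+ρ) / T y) = (1+ρ) * Real.log (S y) - Real.log (T y) := by
        rw [Real.log_div (ne_of_gt (Real.rpow_pos_of_pos hSy _)) hTy, Real.log_rpow hSy]
      rw [h4]
      have h5 : (1+ρ) * (∑ x, (if V y x = 0 then 0
            else V y x * Real.log ((Q x * P x y ^ β) / V y x)))
          ≤ (1+ρ) * Real.log (S y) := mul_le_mul_of_nonneg_left hG (le_of_lt hρ1)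
      have := mul_le_mul_of_nonneg_left (sub_le_sub_right h5 (Real.log (T y))) (hT.1 y)
      linarith [this]
  have houter : ∑ y, (if T y = 0 then 0 else T y * Real.log ((S y) ^ (1+ρ) / T y))
      ≤ Real.log Z := by
    refine gibbs T (fun y => (S y) ^ (1+ρ)) hT.1 (fun y => Real.rpow_nonneg (hSnn y) _)
      ?_ hT.2 hZpos (le_refl _)
    intro y hTy
    obtain ⟨x0, hx0⟩ := Finset.exists_ne_zero_of_sum_ne_zero
      ((hVp y).2 ▸ one_ne_zero : ∑ x, V y x ≠ 0)
    have h : T y * V y x0 ≠ 0 := mul_ne_zero (ne_of_gt hTy) hx0.2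
    exact Real.rpow_pos_of_pos (hSpos y x0 (hsupp y x0 h).1 (hsupp y x0 h).2) _
  have hnegsum : ∑ y, ∑ x, (-(rKL (T y * V y x) (Q x * P x y)
        + ρ * rKL (T y * V y x) (T y * Q x)))
      = -((∑ y, ∑ x, rKL (T y * V y x) (Q x * P x y))
        + ρ * ∑ y, ∑ x, rKL (T y * V y x) (T y * Q x)) := by
    simp only [Finset.sum_neg_distrib, Finset.sum_add_distrib, Finset.mul_sum]
  have hbound : -((∑ y, ∑ x, rKL (T y * V y x) (Q x * P x y))
        + ρ * ∑ y, ∑ x, rKL (T y * V y x) (T y * Q x)) ≤ Real.log Z := by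
    rw [← hnegsum]
    calc ∑ y, ∑ x, (-(rKL (T y * V y x) (Q x * P x y)
          + ρ * rKL (T y * V y x) (T y * Q x)))
        ≤ ∑ y, (if T y = 0 then 0 else T y * Real.log ((S y) ^ (1+ρ) / T y)) :=
          Finset.sum_le_sum fun y _ => hinner y
      _ ≤ Real.log Z := houter
  rw [hval]
  linarith

lemma formula_facts {𝓧 𝓨 : Type*} [Fintype 𝓧] [Fintype 𝓨]
    (P : 𝓧 → 𝓨 → ℝ) (hP : IsChannel P) (ρ : ℝ) (hρ : ρ ∈ Set.Ioo (-1:ℝ) 0)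
    (Q : 𝓧 → ℝ) (hQ : IsPMF Q) (T : 𝓨 → ℝ) (V : 𝓨 → 𝓧 → ℝ)
    (hTdef : ∀ y, T y = (∑ a, Q a * P a y ^ (1/(1+ρ))) ^ (1+ρ)
        / ∑ y', (∑ a, Q a * P a y' ^ (1/(1+ρ))) ^ (1+ρ))
    (hVdef : ∀ y, 0 < T y → ∀ x,
      V y x = Q x * P x y ^ (1/(1+ρ)) / ∑ a, Q a * P a y ^ (1/(1+ρ))) :
    IsPMF T ∧ (∀ y x, T y * V y x ≠ 0 → 0 < Q x ∧ 0 < P x y) := by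
  have hρ1 : (0:ℝ) < 1 + ρ := by linarith [hρ.1]
  set β : ℝ := 1/(1+ρ) with hβdef
  have hβ : 0 < β := by positivity
  have hSnn : ∀ y, 0 ≤ ∑ a, Q a * P a y ^ β :=
    fun y => Finset.sum_nonneg fun a _ => mul_nonneg (hQ.1 a) (Real.rpow_nonneg ((hP a).1 y) β)
  have hZpos : 0 < ∑ y', (∑ a, Q a * P a y' ^ β) ^ (1+ρ) := by
    obtain ⟨x, hx⟩ := Finset.exists_ne_zero_of_sum_ne_zero (hQ.2 ▸ one_ne_zero : ∑ a, Q a ≠ 0)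
    have hQx : 0 < Q x := lt_of_le_of_ne (hQ.1 x) (Ne.symm hx.2)
    obtain ⟨y, hy⟩ := Finset.exists_ne_zero_of_sum_ne_zero ((hP x).2 ▸ one_ne_zero : ∑ y, P x y ≠ 0)
    have hPy : 0 < P x y := lt_of_le_of_ne ((hP x).1 y) (Ne.symm hy.2)
    have hSy : 0 < ∑ a, Q a * P a y ^ β :=
      lt_of_lt_of_le (mul_pos hQx (Real.rpow_pos_of_pos hPy β))
        (Finset.single_le_sum (fun a _ => mul_nonneg (hQ.1 a) (Real.rpow_nonneg ((hP a).1 y) β))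
          (Finset.mem_univ x))
    exact lt_of_lt_of_le (Real.rpow_pos_of_pos hSy (1+ρ))
      (Finset.single_le_sum (fun y' _ => Real.rpow_nonneg (hSnn y') _) (Finset.mem_univ y))
  have hTnn : ∀ y, 0 ≤ T y := fun y => by
    rw [hTdef y]
    exact div_nonneg (Real.rpow_nonneg (hSnn y) _) (le_of_lt hZpos)
  have hTsum : ∑ y, T y = 1 := by
    rw [Finset.sum_congr rfl fun y _ => hTdef y, ← Finset.sum_div]
    exact div_self (ne_of_gt hZpos)
  have hTS : ∀ y, T y ≠ 0 → 0 < ∑ a, Q a * P a y ^ β := by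
    intro y h
    by_contra hc
    have h0 : (∑ a, Q a * P a y ^ β) = 0 := le_antisymm (not_lt.mp hc) (hSnn y)
    apply h
    rw [hTdef y, h0, Real.zero_rpow (ne_of_gt hρ1), zero_div]
  refine ⟨⟨hTnn, hTsum⟩, ?_⟩
  intro y x h
  have hTy0 := left_ne_zero_of_mul h
  have hTy : 0 < T y := lt_of_le_of_ne (hTnn y) (Ne.symm hTy0)
  have hVx := right_ne_zero_of_mul h
  rw [hVdef y hTy x] at hVx
  have h1 : Q x * P x y ^ β ≠ 0 := fun h0 => hVx (by rw [h0, zero_div])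
  refine ⟨lt_of_le_of_ne (hQ.1 x) (Ne.symm (left_ne_zero_of_mul h1)), ?_⟩
  have h2 : P x y ^ β ≠ 0 := right_ne_zero_of_mul h1
  have h3 : P x y ≠ 0 := fun h0 => h2 (by rw [h0, Real.zero_rpow (ne_of_gt hβ)])
  exact lt_of_le_of_ne ((hP x).1 y) (Ne.symm h3)

theorem stmt_18 {𝓧 𝓨 : Type*} [Fintype 𝓧] [Fintype 𝓨] [Nonempty 𝓧] [Nonempty 𝓨]
    (P : 𝓧 → 𝓨 → ℝ) (hP : IsChannel P)
    (ρ : ℝ) (hρ : ρ ∈ Set.Ioo (-1 : ℝ) 0)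
    (Qs : ℕ → 𝓧 → ℝ) (Ts : ℕ → 𝓨 → ℝ) (Vs : ℕ → 𝓨 → 𝓧 → ℝ)
    (hQ0 : IsPMF (Qs 0))
    (hVpmf : ∀ ℓ, IsCondPMF (Vs ℓ))
    (hT : ∀ ℓ y, Ts ℓ y
      = (∑ a, Qs ℓ a * P a y ^ (1 / (1 + ρ))) ^ (1 + ρ) /
          ∑ y', (∑ a, Qs ℓ a * P a y' ^ (1 / (1 + ρ))) ^ (1 + ρ))
    (hV : ∀ ℓ y, 0 < Ts ℓ y → ∀ x,
      Vs ℓ y x = Qs ℓ x * P x y ^ (1 / (1 + ρ)) / ∑ a, Qs ℓ a * P a y ^ (1 / (1 + ρ)))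
    (hrec : ∀ ℓ x, Qs (ℓ + 1) x = ∑ y, Ts ℓ y * Vs ℓ y x) :
    (∀ ℓ, Frho ρ (Ts ℓ) (Vs ℓ) (Qs (ℓ + 1)) P ≤ Frho ρ (Ts ℓ) (Vs ℓ) (Qs ℓ) P
      ∧ Frho ρ (Ts (ℓ + 1)) (Vs (ℓ + 1)) (Qs (ℓ + 1)) P
          ≤ Frho ρ (Ts ℓ) (Vs ℓ) (Qs (ℓ + 1)) P)
    ∧ Antitone (fun ℓ => Frho ρ (Ts ℓ) (Vs ℓ) (Qs ℓ) P) := by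
  have hQpmf : ∀ ℓ, IsPMF (Qs ℓ) := by
    intro ℓ
    induction ℓ with
    | zero => exact hQ0
    | succ n ih =>
      have hTn : IsPMF (Ts n) :=
        (formula_facts P hP ρ hρ (Qs n) ih (Ts n) (Vs n) (hT n) (hV n)).1
      constructor
      · intro x
        rw [hrec n x]
        exact Finset.sum_nonneg fun y _ => mul_nonneg (hTn.1 y) (((hVpmf n) y).1 x)
      · have h1 : ∑ x, Qs (n+1) x = ∑ y, Ts n y * ∑ x, Vs n y x := by
          simp only [hrec n, Finset.mul_sum]
          rw [Finset.sum_comm]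
        rw [h1, Finset.sum_congr rfl fun y _ => by rw [((hVpmf n) y).2, mul_one], hTn.2]
  have hTpmf : ∀ ℓ, IsPMF (Ts ℓ) := fun ℓ =>
    (formula_facts P hP ρ hρ (Qs ℓ) (hQpmf ℓ) (Ts ℓ) (Vs ℓ) (hT ℓ) (hV ℓ)).1
  have hsupp : ∀ ℓ y x, Ts ℓ y * Vs ℓ y x ≠ 0 → 0 < Qs ℓ x ∧ 0 < P x y := fun ℓ =>
    (formula_facts P hP ρ hρ (Qs ℓ) (hQpmf ℓ) (Ts ℓ) (Vs ℓ) (hT ℓ) (hV ℓ)).2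
  have hsupp' : ∀ ℓ y x, Ts ℓ y * Vs ℓ y x ≠ 0 → 0 < Qs (ℓ+1) x ∧ 0 < P x y := by
    intro ℓ y x h
    refine ⟨?_, (hsupp ℓ y x h).2⟩
    have hTV0 : ∀ y', 0 ≤ Ts ℓ y' * Vs ℓ y' x :=
      fun y' => mul_nonneg ((hTpmf ℓ).1 y') (((hVpmf ℓ) y').1 x)
    have hpos : 0 < Ts ℓ y * Vs ℓ y x := lt_of_le_of_ne (hTV0 y) (Ne.symm h)
    rw [hrec ℓ x]
    exact lt_of_lt_of_le hpos (Finset.single_le_sum (fun y' _ => hTV0 y') (Finset.mem_univ y))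
  have hmain : ∀ ℓ, Frho ρ (Ts ℓ) (Vs ℓ) (Qs (ℓ + 1)) P ≤ Frho ρ (Ts ℓ) (Vs ℓ) (Qs ℓ) P
      ∧ Frho ρ (Ts (ℓ + 1)) (Vs (ℓ + 1)) (Qs (ℓ + 1)) P
          ≤ Frho ρ (Ts ℓ) (Vs ℓ) (Qs (ℓ + 1)) P := by
    intro ℓ
    constructor
    · exact stepC P ρ hρ (Ts ℓ) (Vs ℓ) (Qs ℓ) (Qs (ℓ+1)) (hTpmf ℓ) (hVpmf ℓ) (hQpmf ℓ)
        (hsupp ℓ) (hrec ℓ)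
    · exact stepD P hP ρ hρ (Qs (ℓ+1)) (hQpmf (ℓ+1)) (Ts ℓ) (Ts (ℓ+1)) (Vs ℓ) (Vs (ℓ+1))
        (hTpmf ℓ) (hVpmf ℓ) (hsupp' ℓ) (hT (ℓ+1)) (hVpmf (ℓ+1)) (hV (ℓ+1))
  refine ⟨hmain, antitone_nat_of_succ_le fun n => ?_⟩
  exact le_trans (hmain n).2 (hmain n).1
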